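/- Let k_1, k_2 ∈ ℝ^n be unit vectors and β_1, β_2 ∈ [0,2]. If β_1 ∈ [0,1] or β_2 ∈ [0,1], then every complex eigenvalue of the matrix A = (I − β_1 k_1 k_1ᵀ)(I − β_2 k_2 k_2ᵀ) is real. -/

import Mathlib

open Matrix

/-- The generalized Householder matrix `I − β k kᵀ`. -/
noncomputable def house {n : ℕ} (β : ℝ) (k : Fin n → ℝ) : Matrix (Fin n) (Fin n) ℝ :=
  1 - β • vecMulVec k k

/-- `μ ∈ ℂ` is an eigenvalue of the complexification of the real matrix `A`. -/
def hasEigC {n : ℕ} (A : Matrix (Fin n) (Fin n) ℝ) (μ : ℂ) : Prop :=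
  Module.End.HasEigenvalue (Matrix.toLin' (A.map (fun x => (x : ℂ)))) μ

lemma key_ineq (a b s : ℝ) (ha0 : 0 ≤ a) (ha2 : a ≤ 2) (hb0 : 0 ≤ b) (hb2 : b ≤ 2)
    (hs0 : 0 ≤ s) (hs1 : s ≤ 1) (h : a ≤ 1 ∨ b ≤ 1) :
    4 * (a * b * (1 - s)) ≤ (a + b - a * b * s) ^ 2 := by
  rcases le_or_gt ((1 - a) * (1 - b)) 0 with hd | hd
  · nlinarith [sq_nonneg (2 - a - b + a*b*s), sq_nonneg (a + b - a*b*s)]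
  · have h1a : a < 1 ∧ b < 1 := by
      rcases h with h | h <;> rcases lt_trichotomy a 1 with h' | h' | h' <;>
        constructor <;> nlinarith
    nlinarith [sq_nonneg (a - b), mul_nonneg (mul_nonneg ha0 hb0) hs0,
      mul_nonneg (mul_nonneg (mul_nonneg ha0 hb0) hs0) (le_of_lt hd)]

lemma vecMulVec_mulVec' {n : ℕ} (w u v : Fin n → ℂ) :
    (vecMulVec w u) *ᵥ v = (u ⬝ᵥ v) • w := by
  ext i
  simp [vecMulVec_apply, mulVec, dotProduct, Finset.mul_sum, mul_comm, mul_assoc, mul_left_comm]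

lemma houseC_mulVec {n : ℕ} (c : ℂ) (K v : Fin n → ℂ) :
    ((1 : Matrix (Fin n) (Fin n) ℂ) - c • vecMulVec K K) *ᵥ v
      = v - (c * (K ⬝ᵥ v)) • K := by
  rw [sub_mulVec, one_mulVec, smul_mulVec, vecMulVec_mulVec', smul_smul]

lemma house_map {n : ℕ} (β : ℝ) (k : Fin n → ℝ) :
    (house β k).map (fun x => (x : ℂ))
      = 1 - (β : ℂ) • vecMulVec (fun i => (k i : ℂ)) (fun i => (k i : ℂ)) := by
  ext i j
  simp [house, map_apply, vecMulVec, one_apply, Matrix.sub_apply, Matrix.smul_apply]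
  by_cases hij : i = j <;> simp [hij] <;> push_cast <;> ring

lemma dot_cast {n : ℕ} (u w : Fin n → ℝ) :
    (fun i => (u i : ℂ)) ⬝ᵥ (fun i => (w i : ℂ)) = ((u ⬝ᵥ w : ℝ) : ℂ) := by
  simp [dotProduct]

/-- For unit vectors `k₁, k₂` and `β₁, β₂ ∈ [0,2]` with `β₁ ∈ [0,1]` or `β₂ ∈ [0,1]`,
every complex eigenvalue of `(I − β₁ k₁ k₁ᵀ)(I − β₂ k₂ k₂ᵀ)` is real. -/
theorem householder_pair_real_eigenvalues {n : ℕ} (k₁ k₂ : Fin n → ℝ)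
    (hk₁ : k₁ ⬝ᵥ k₁ = 1) (hk₂ : k₂ ⬝ᵥ k₂ = 1)
    (β₁ β₂ : ℝ) (hβ₁ : β₁ ∈ Set.Icc (0 : ℝ) 2) (hβ₂ : β₂ ∈ Set.Icc (0 : ℝ) 2)
    (h : β₁ ∈ Set.Icc (0 : ℝ) 1 ∨ β₂ ∈ Set.Icc (0 : ℝ) 1) :
    ∀ μ : ℂ, hasEigC (house β₁ k₁ * house β₂ k₂) μ → μ.im = 0 := by
  intro μ hμ
  by_contra him
  set K₁ : Fin n → ℂ := fun i => (k₁ i : ℂ) with hK₁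
  set K₂ : Fin n → ℂ := fun i => (k₂ i : ℂ) with hK₂
  obtain ⟨v, hv⟩ := hμ.exists_hasEigenvector
  have hv0 : v ≠ 0 := hv.right
  have happ : ((house β₁ k₁ * house β₂ k₂).map (fun x => (x : ℂ))) *ᵥ v = μ • v := by
    rw [← Matrix.toLin'_apply]; exact hv.apply_eq_smul
  have hmapmul : ((house β₁ k₁ * house β₂ k₂).map (fun x => (x : ℂ)))
      = (house β₁ k₁).map (fun x => (x : ℂ)) * (house β₂ k₂).map (fun x => (x : ℂ)) := by
    have : (fun x : ℝ => (x : ℂ)) = ⇑(algebraMap ℝ ℂ) := rfl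
    rw [this, Matrix.map_mul]
  set c : ℝ := k₁ ⬝ᵥ k₂ with hc
  set x : ℂ := K₁ ⬝ᵥ v with hx
  set y : ℂ := K₂ ⬝ᵥ v with hy
  have hK11 : K₁ ⬝ᵥ K₁ = 1 := by rw [dot_cast, hk₁]; norm_num
  have hK22 : K₂ ⬝ᵥ K₂ = 1 := by rw [dot_cast, hk₂]; norm_num
  have hK12 : K₁ ⬝ᵥ K₂ = (c : ℂ) := by rw [dot_cast]
  have hK21 : K₂ ⬝ᵥ K₁ = (c : ℂ) := by rw [dot_cast, dotProduct_comm]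
  have key : μ • v = v - ((β₂:ℂ) * y) • K₂ - ((β₁:ℂ) * (x - (β₂:ℂ) * y * c)) • K₁ := by
    rw [← happ, hmapmul, ← Matrix.mulVec_mulVec, house_map, house_map, houseC_mulVec,
      houseC_mulVec]
    rw [dotProduct_sub, dotProduct_smul, hK12]
    rw [← hK₁, ← hK₂, ← hx]
    simp only [smul_eq_mul, ← hy]
  -- dot with K₁
  have eq1 : μ * x = x - (β₂:ℂ) * y * c - (β₁:ℂ) * (x - (β₂:ℂ) * y * c) := by
    have := congrArg (fun w => K₁ ⬝ᵥ w) key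
    simpa [dotProduct_sub, dotProduct_smul, hK11, hK12, ← hx, smul_eq_mul,
      mul_comm, mul_assoc, mul_left_comm] using this
  have eq2 : μ * y = y - (β₂:ℂ) * y - (β₁:ℂ) * (x - (β₂:ℂ) * y * c) * c := by
    have := congrArg (fun w => K₂ ⬝ᵥ w) key
    simpa [dotProduct_sub, dotProduct_smul, hK22, hK21, ← hy, smul_eq_mul,
      mul_comm, mul_assoc, mul_left_comm] using this
  have hμ1 : μ ≠ 1 := by intro h1; rw [h1] at him; simp at him
  have hxy : ¬(x = 0 ∧ y = 0) := by
    rintro ⟨hx0, hy0⟩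
    rw [hx0, hy0] at key
    simp at key
    apply hμ1
    have : (μ - 1) • v = 0 := by rw [sub_smul, key, one_smul, sub_self]
    rcases smul_eq_zero.mp this with h' | h'
    · exact sub_eq_zero.mp h'
    · exact absurd h' hv0
  set w : ℂ := 1 - μ with hw
  have hwim : w.im = -μ.im := by simp [hw]
  have hwim0 : w.im ≠ 0 := by rw [hwim]; exact neg_ne_zero.mpr him
  -- derive that w satisfies a real quadratic, or w is real directly
  have eq1' : (w - (β₁:ℂ)) * x = (β₂:ℂ) * c * (1 - (β₁:ℂ)) * y := by
    rw [hw]; linear_combination -eq1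
  have eq2' : (w - (β₂:ℂ) + (β₁:ℂ) * (β₂:ℂ) * c * c) * y = (β₁:ℂ) * c * x := by
    rw [hw]; linear_combination -eq2
  by_cases hy0 : y = 0
  · have hx0 : x ≠ 0 := fun hx0 => hxy ⟨hx0, hy0⟩
    rw [hy0, mul_zero] at eq1'
    have hwb : w = (β₁:ℂ) :=
      sub_eq_zero.mp ((mul_eq_zero.mp eq1').resolve_right hx0)
    exact hwim0 (by rw [hwb]; simp)
  by_cases hx0 : x = 0
  · rw [hx0, mul_zero] at eq2'
    have : w = (β₂:ℂ) - (β₁:ℂ) * (β₂:ℂ) * c * c := by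
      rcases mul_eq_zero.mp eq2' with h' | h'
      · linear_combination h'
      · exact absurd h' hy0
    apply hwim0
    rw [this]
    simp
  · -- both nonzero: quadratic
    have hquad : w ^ 2 - ((β₁ + β₂ - β₁ * β₂ * c ^ 2 : ℝ) : ℂ) * w
        + ((β₁ * β₂ * (1 - c ^ 2) : ℝ) : ℂ) = 0 := by
      have hmul : ((w - (β₁:ℂ)) * x) * ((w - (β₂:ℂ) + (β₁:ℂ) * (β₂:ℂ) * c * c) * y)
          = ((β₂:ℂ) * c * (1 - (β₁:ℂ)) * y) * ((β₁:ℂ) * c * x) := by rw [eq1', eq2']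
      have hxy' : x * y ≠ 0 := mul_ne_zero hx0 hy0
      have : ((w - (β₁:ℂ)) * (w - (β₂:ℂ) + (β₁:ℂ) * (β₂:ℂ) * c * c)
          - (β₂:ℂ) * c * (1 - (β₁:ℂ)) * ((β₁:ℂ) * c)) * (x * y) = 0 := by
        linear_combination hmul
      have h0 := (mul_eq_zero.mp this).resolve_right hxy'
      push_cast
      linear_combination h0
    set t : ℝ := β₁ + β₂ - β₁ * β₂ * c ^ 2 with ht
    set d : ℝ := β₁ * β₂ * (1 - c ^ 2) with hd
    have him2 := congrArg Complex.im hquad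
    have hre2 := congrArg Complex.re hquad
    simp [Complex.mul_im, Complex.mul_re, pow_two] at him2 hre2
    have hwre : w.re = t / 2 := by
      rcases mul_eq_zero.mp (by linarith : (2 * w.re - t) * w.im = 0) with h' | h'
      · linarith
      · exact absurd h' hwim0
    have hc2 : c ^ 2 ≤ 1 := by
      have := Finset.sum_mul_sq_le_sq_mul_sq Finset.univ k₁ k₂
      have e1 : ∑ i, k₁ i ^ 2 = k₁ ⬝ᵥ k₁ := by simp [dotProduct, pow_two]
      have e2 : ∑ i, k₂ i ^ 2 = k₂ ⬝ᵥ k₂ := by simp [dotProduct, pow_two]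
      rw [e1, e2, hk₁, hk₂] at this
      simpa [hc, dotProduct] using this
    have hc20 : (0:ℝ) ≤ c ^ 2 := sq_nonneg c
    obtain ⟨hb10, hb12⟩ := hβ₁
    obtain ⟨hb20, hb22⟩ := hβ₂
    have hkey := key_ineq β₁ β₂ (c ^ 2) hb10 hb12 hb20 hb22 hc20 hc2
      (h.imp (fun h' => h'.2) (fun h' => h'.2))
    rw [← ht, ← hd] at hkey
    have hle : w.im ^ 2 ≤ 0 := by nlinarith [hwre, hre2, hkey]
    have hsq : w.im ^ 2 = 0 := le_antisymm hle (sq_nonneg _)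
    exact hwim0 (pow_eq_zero_iff two_ne_zero |>.mp hsq)
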